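/- Let L ⊂ ℂ be a lattice, μ(L) the minimal norm of a nonzero lattice vector, and v a primitive vector with |v| > 2·area(L)/μ(L). Then the vector v' of minimal norm completing v to a positively oriented basis {v, v'} of L is unique. -/

import Mathlib

noncomputable section

open Complex

/-- `{v, v'}` is a positively oriented ℤ-basis of the lattice `L ⊆ ℂ`. -/
def IsOrientedBasis (L : AddSubgroup ℂ) (v v' : ℂ) : Prop :=
  0 < (v' / v).im ∧ AddSubgroup.closure {v, v'} = L

/-- `v` is a primitive vector of `L`: it can be completed to a basis of `L`. -/
def IsPrimitive (L : AddSubgroup ℂ) (v : ℂ) : Prop :=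
  ∃ v', IsOrientedBasis L v v'

/-- `v'` has minimal norm among completions of `v` to a positively oriented basis of `L`. -/
def IsMinCompletion (L : AddSubgroup ℂ) (v v' : ℂ) : Prop :=
  IsOrientedBasis L v v' ∧ ∀ w, IsOrientedBasis L v w → ‖v'‖ ≤ ‖w‖

/-- The (signed) area of the parallelogram spanned by `v, v'`; it is positive
when `{v, v'}` is positively oriented, and equals `|v||v'| sin α`. -/
def pArea (v v' : ℂ) : ℝ := ((starRingEnd ℂ) v * v').im

lemma pArea_def' (x y : ℂ) : pArea x y = x.re * y.im - x.im * y.re := by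
  simp [pArea, Complex.mul_im]; ring

lemma pArea_pos_of_oriented {L : AddSubgroup ℂ} {v v' : ℂ}
    (h : IsOrientedBasis L v v') : 0 < pArea v v' := by
  obtain ⟨hpos, -⟩ := h
  have hv0 : v ≠ 0 := by rintro rfl; simp at hpos
  have hN : 0 < Complex.normSq v := Complex.normSq_pos.mpr hv0
  have : pArea v v' = (v' / v).im * Complex.normSq v := by
    rw [Complex.div_im, pArea_def']
    field_simp
  rw [this]
  exact mul_pos hpos hN

lemma exists_int_coeff {x y z : ℂ} (h : z ∈ AddSubgroup.closure ({x, y} : Set ℂ)) :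
    ∃ m n : ℤ, z = (m : ℂ) * x + (n : ℂ) * y := by
  rw [AddSubgroup.mem_closure_pair] at h
  obtain ⟨m, n, h⟩ := h
  exact ⟨m, n, by simpa [zsmul_eq_mul] using h.symm⟩

lemma pArea_int_comb (a b : ℂ) (m n m' n' : ℤ) :
    pArea ((m : ℂ) * a + (n : ℂ) * b) ((m' : ℂ) * a + (n' : ℂ) * b)
      = ((m * n' - n * m' : ℤ) : ℝ) * pArea a b := by
  simp only [pArea_def', Complex.add_re, Complex.add_im, Complex.mul_re, Complex.mul_im,
    Complex.intCast_re, Complex.intCast_im]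
  push_cast
  ring

lemma pArea_right_comb (x y : ℂ) (a b : ℤ) :
    pArea x ((a : ℂ) * x + (b : ℂ) * y) = (b : ℝ) * pArea x y := by
  simp only [pArea_def', Complex.add_re, Complex.add_im, Complex.mul_re, Complex.mul_im,
    Complex.intCast_re, Complex.intCast_im]
  ring

lemma pArea_eq_of_closure {a b c d : ℂ}
    (h : AddSubgroup.closure ({a, b} : Set ℂ) = AddSubgroup.closure ({c, d} : Set ℂ))
    (hab : 0 < pArea a b) (hcd : 0 < pArea c d) : pArea a b = pArea c d := by
  obtain ⟨m, n, hc⟩ := exists_int_coeff (h ▸ AddSubgroup.subset_closure (by simp : c ∈ ({c, d} : Set ℂ)))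
  obtain ⟨m', n', hd⟩ := exists_int_coeff (h ▸ AddSubgroup.subset_closure (by simp : d ∈ ({c, d} : Set ℂ)))
  obtain ⟨p, q, ha⟩ := exists_int_coeff (h.symm ▸ AddSubgroup.subset_closure (by simp : a ∈ ({a, b} : Set ℂ)))
  obtain ⟨p', q', hb⟩ := exists_int_coeff (h.symm ▸ AddSubgroup.subset_closure (by simp : b ∈ ({a, b} : Set ℂ)))
  have h1 : pArea c d = ((m * n' - n * m' : ℤ) : ℝ) * pArea a b := by
    rw [hc, hd]; exact pArea_int_comb a b m n m' n'
  have h2 : pArea a b = ((p * q' - q * p' : ℤ) : ℝ) * pArea c d := by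
    rw [ha, hb]; exact pArea_int_comb c d p q p' q'
  set e : ℤ := m * n' - n * m'
  set f : ℤ := p * q' - q * p'
  have hef : ((e * f : ℤ) : ℝ) = 1 := by
    have h : pArea a b = ((f : ℝ) * ((e : ℝ) * pArea a b)) := by rw [← h1, ← h2]
    have h2' : (((e * f : ℤ) : ℝ) - 1) * pArea a b = 0 := by push_cast; nlinarith [h]
    rcases mul_eq_zero.mp h2' with h3 | h3
    · linarith
    · exact absurd h3 (ne_of_gt hab)
  have hef' : e * f = 1 := by exact_mod_cast hef
  have he_pos : 0 < (e : ℝ) := by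
    by_contra hle
    push_neg at hle
    nlinarith [h1]
  have : e = 1 := by
    rcases Int.mul_eq_one_iff_eq_one_or_neg_one.mp hef' with ⟨he, -⟩ | ⟨he, -⟩
    · exact he
    · exfalso; rw [he] at he_pos; norm_num at he_pos
  rw [h1, this]
  norm_num

/-- if `|v| > 2·area(L)/μ(L)` then the minimal-norm positive
completion of the primitive vector `v` is unique. -/
theorem min_completion_unique (L : AddSubgroup ℂ) (w w' : ℂ)
    (hL : IsOrientedBasis L w w') (μ : ℝ)
    (hμmin : ∀ u ∈ L, u ≠ 0 → μ ≤ ‖u‖)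
    (hμmem : ∃ u ∈ L, u ≠ 0 ∧ ‖u‖ = μ)
    (v : ℂ) (hv : 2 * pArea w w' / μ < ‖v‖)
    (v₁ v₂ : ℂ) (h1 : IsMinCompletion L v v₁) (h2 : IsMinCompletion L v v₂) :
    v₁ = v₂ := by
  -- basic positivity
  obtain ⟨u₀, hu₀L, hu₀0, hu₀μ⟩ := hμmem
  have hμpos : 0 < μ := hu₀μ ▸ (norm_pos_iff.mpr hu₀0)
  have hP1 : 0 < pArea v v₁ := pArea_pos_of_oriented h1.1
  have hP2 : 0 < pArea v v₂ := pArea_pos_of_oriented h2.1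
  have hAw : 0 < pArea w w' := pArea_pos_of_oriented hL
  have hclo1 : AddSubgroup.closure ({v, v₁} : Set ℂ) = L := h1.1.2
  have hclo2 : AddSubgroup.closure ({v, v₂} : Set ℂ) = L := h2.1.2
  -- area invariance
  have hA : pArea v v₁ = pArea w w' :=
    pArea_eq_of_closure (hclo1.trans hL.2.symm) hP1 hAw
  have hv₁L : v₁ ∈ L := by
    rw [← hclo1]; exact AddSubgroup.subset_closure (by simp)
  have hv₂L : v₂ ∈ L := by
    rw [← hclo2]; exact AddSubgroup.subset_closure (by simp)
  -- v₂ = a v + b v₁ and v₁ = c v + d v₂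
  obtain ⟨a, b, hab⟩ := exists_int_coeff
    (show v₂ ∈ AddSubgroup.closure ({v, v₁} : Set ℂ) from by rw [hclo1]; exact hv₂L)
  obtain ⟨c, d, hcd⟩ := exists_int_coeff
    (show v₁ ∈ AddSubgroup.closure ({v, v₂} : Set ℂ) from by rw [hclo2]; exact hv₁L)
  have hb1 : pArea v v₂ = (b : ℝ) * pArea v v₁ := by rw [hab]; exact pArea_right_comb v v₁ a b
  have hd1 : pArea v v₁ = (d : ℝ) * pArea v v₂ := by rw [hcd]; exact pArea_right_comb v v₂ c d
  have hbd : ((b * d : ℤ) : ℝ) = 1 := by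
    have h := hd1
    rw [hb1] at h
    have h2 : (((b * d : ℤ) : ℝ) - 1) * pArea v v₁ = 0 := by push_cast; nlinarith [h]
    rcases mul_eq_zero.mp h2 with h3 | h3
    · linarith
    · exact absurd h3 (ne_of_gt hP1)
  have hbd' : b * d = 1 := by exact_mod_cast hbd
  have hbpos : 0 < (b : ℝ) := by
    by_contra hle
    push_neg at hle
    nlinarith [hb1]
  have hb : b = 1 := by
    rcases Int.mul_eq_one_iff_eq_one_or_neg_one.mp hbd' with ⟨he, -⟩ | ⟨he, -⟩
    · exact he
    · exfalso; rw [he] at hbpos; norm_num at hbpos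
  have hab' : v₂ = (a : ℂ) * v + v₁ := by rw [hab, hb]; push_cast; ring
  -- equal norms
  have habs : ‖v₁‖ = ‖v₂‖ :=
    le_antisymm (h1.2 v₂ h2.1) (h2.2 v₁ h1.1)
  by_cases ha0 : a = 0
  · rw [ha0] at hab'; simp at hab'; exact hab'.symm
  -- a ≠ 0 : derive a contradiction
  exfalso
  have haR : ((a : ℝ)) ≠ 0 := Int.cast_ne_zero.mpr ha0
  have hNeq : Complex.normSq v₁ = Complex.normSq v₂ := by
    rw [← Complex.sq_norm, ← Complex.sq_norm, habs]
  -- real coordinates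
  set xr := v.re; set xi := v.im
  set yr := v₁.re; set yi := v₁.im
  have hv2re : v₂.re = (a : ℝ) * xr + yr := by
    rw [hab']; simp [Complex.add_re, Complex.mul_re]; rfl
  have hv2im : v₂.im = (a : ℝ) * xi + yi := by
    rw [hab']; simp [Complex.add_im, Complex.mul_im]; rfl
  have hexp : (a : ℝ) * (xr ^ 2 + xi ^ 2) + 2 * (xr * yr + xi * yi) = 0 := by
    have := hNeq
    rw [Complex.normSq_apply, Complex.normSq_apply, hv2re, hv2im] at this
    have h' : (a : ℝ) * ((a : ℝ) * (xr ^ 2 + xi ^ 2) + 2 * (xr * yr + xi * yi)) = 0 := by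
      linear_combination -this
    rcases mul_eq_zero.mp h' with h'' | h''
    · exact absurd h'' haR
    · exact h''
  -- the short vector u = v₁ + v₂
  set u := v₁ + v₂ with hu
  have huL : u ∈ L := add_mem hv₁L hv₂L
  have hure : u.re = (a : ℝ) * xr + 2 * yr := by
    rw [hu, Complex.add_re, hv2re]; ring
  have huim : u.im = (a : ℝ) * xi + 2 * yi := by
    rw [hu, Complex.add_im, hv2im]; ring
  have hT : xr * u.re + xi * u.im = 0 := by
    rw [hure, huim]; linear_combination hexp
  have hParea_u : xr * u.im - xi * u.re = 2 * pArea v v₁ := by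
    rw [hure, huim, pArea_def']; ring
  have hu0 : u ≠ 0 := by
    intro h0
    rw [h0] at hParea_u
    simp at hParea_u
    nlinarith [hP1]
  -- |u|² |v|² = (2 P)²
  have hkey : Complex.normSq u * Complex.normSq v = (2 * pArea v v₁) ^ 2 := by
    have : (xr ^ 2 + xi ^ 2) * (u.re ^ 2 + u.im ^ 2)
        = (xr * u.re + xi * u.im) ^ 2 + (xr * u.im - xi * u.re) ^ 2 := by ring
    rw [Complex.normSq_apply, Complex.normSq_apply]
    linear_combination this + (xr * u.re + xi * u.im) * hT
      + (xr * u.im - xi * u.re + 2 * pArea v v₁) * hParea_u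
  -- final numeric contradiction
  have hμu : μ ≤ ‖u‖ := hμmin u huL hu0
  have hvpos : (0 : ℝ) < ‖v‖ := by
    have : v ≠ 0 := by
      intro h0
      rw [h0] at hP1
      simp [pArea_def'] at hP1
    exact norm_pos_iff.mpr this
  have hv' : 2 * pArea v v₁ < μ * ‖v‖ := by
    rw [hA]
    have := (div_lt_iff₀ hμpos).mp hv
    nlinarith [this]
  have h5 : μ * ‖v‖ ≤ ‖u‖ * ‖v‖ :=
    mul_le_mul_of_nonneg_right hμu hvpos.le
  have h6 : (‖u‖ * ‖v‖) ^ 2 = (2 * pArea v v₁) ^ 2 := by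
    rw [mul_pow, Complex.sq_norm, Complex.sq_norm, hkey]
  have h8 : 2 * pArea v v₁ < ‖u‖ * ‖v‖ := lt_of_lt_of_le hv' h5
  have h9 : (2 * pArea v v₁) ^ 2 < (‖u‖ * ‖v‖) ^ 2 :=
    pow_lt_pow_left₀ h8 (by linarith) (by norm_num)
  rw [h6] at h9
  exact lt_irrefl _ h9
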